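/- Let f : ℝ^d × ℝ^n → ℝ^d be L-Lipschitz in the state with L > 0 and M-bounded, and suppose f is odd in the action up to a residual bounded by E ≥ 0, i.e. ‖f(x, -a) + f(x, a)‖ ≤ E for all x ∈ ℝ^d, a ∈ ℝ^n. Fix a horizon T ∈ ℕ, a step size ν > 0, and an action sequence a : ℕ → ℝ^n satisfying the mirror reversal condition a(T + k) = -a(T - 1 - k) for all 0 ≤ k ≤ T - 1, and let x : ℕ → ℝ^d be the Euler iterates x(k+1) = x(k) + ν f(x(k), a(k)). Then ‖x(0) - x(2T)‖ ≤ (M ν + E / L)((1 + L ν)^T - 1). -/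

import Mathlib

set_option maxHeartbeats 1000000


/-- **Residual Inversing Actions (geometric form).** If `f` is `L`-Lipschitz
in the state with `L > 0`, `M`-bounded, and odd in the action up to a residual
bounded by `E ≥ 0`, then Euler iterates with mirror-reversed actions satisfy
`‖x 0 - x (2T)‖ ≤ (M ν + E / L) ((1 + L ν)^T - 1)`. -/
theorem residual_soft_reversibility_geom
    {d n : ℕ} (f : EuclideanSpace ℝ (Fin d) × EuclideanSpace ℝ (Fin n) → EuclideanSpace ℝ (Fin d))
    (L M E ν : ℝ) (T : ℕ)
    (hL : 0 < L) (hE : 0 ≤ E)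
    (hf_lip : ∀ (x x' : EuclideanSpace ℝ (Fin d)) (a : EuclideanSpace ℝ (Fin n)),
      ‖f (x, a) - f (x', a)‖ ≤ L * ‖x - x'‖)
    (hf_bdd : ∀ (x : EuclideanSpace ℝ (Fin d)) (a : EuclideanSpace ℝ (Fin n)), ‖f (x, a)‖ ≤ M)
    (hf_res : ∀ (x : EuclideanSpace ℝ (Fin d)) (a : EuclideanSpace ℝ (Fin n)),
      ‖f (x, -a) + f (x, a)‖ ≤ E)
    (hν : 0 < ν)
    (a : ℕ → EuclideanSpace ℝ (Fin n))
    (ha_rev : ∀ k < T, a (T + k) = -a (T - 1 - k))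
    (x : ℕ → EuclideanSpace ℝ (Fin d))
    (hx : ∀ k, x (k + 1) = x k + ν • f (x k, a k)) :
    ‖x 0 - x (2 * T)‖ ≤ (M * ν + E / L) * ((1 + L * ν) ^ T - 1) := by
  have hM : 0 ≤ M := le_trans (norm_nonneg _) (hf_bdd (x 0) (a 0))
  set C := M * ν + E / L with hC
  have hC0 : 0 ≤ C := by positivity
  have hEL : L * (E / L) = E := mul_div_cancel₀ E (ne_of_gt hL)
  have key : ∀ k, k ≤ T → ‖x (T - k) - x (T + k)‖ ≤ C * ((1 + L * ν) ^ k - 1) := by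
    intro k
    induction k with
    | zero => intro _; simp
    | succ k ih =>
      intro hk
      have hkT : k < T := hk
      have ihk := ih (le_of_lt hkT)
      have hsub : T - k = (T - (k + 1)) + 1 := by omega
      have hsub2 : T - (k + 1) = T - 1 - k := by omega
      set u := x (T - (k + 1)) with hu
      set b := a (T - 1 - k) with hb
      have hxu : x (T - k) = u + ν • f (u, b) := by
        rw [hsub, hx, hu, hsub2, hb]
      have hxr : x (T + (k + 1)) = x (T + k) + ν • f (x (T + k), -b) := by
        have h := hx (T + k)
        rw [ha_rev k hkT] at h
        rw [show T + (k + 1) = (T + k) + 1 from rfl, h, hb]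
      have hid : u - x (T + (k + 1)) =
          (x (T - k) - x (T + k)) - ν • (f (u, b) - f (x (T + k), b))
          - ν • (f (x (T + k), -b) + f (x (T + k), b)) := by
        rw [hxu, hxr]; module
      have h1 : ‖u - x (T - k)‖ ≤ ν * M := by
        have h : u - x (T - k) = -(ν • f (u, b)) := by rw [hxu]; abel
        rw [h, norm_neg, norm_smul, Real.norm_eq_abs, abs_of_pos hν]
        exact mul_le_mul_of_nonneg_left (hf_bdd u b) (le_of_lt hν)
      have h2 : ‖u - x (T + k)‖ ≤ ν * M + ‖x (T - k) - x (T + k)‖ := by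
        calc ‖u - x (T + k)‖ = ‖(u - x (T - k)) + (x (T - k) - x (T + k))‖ := by
              rw [sub_add_sub_cancel]
          _ ≤ ‖u - x (T - k)‖ + ‖x (T - k) - x (T + k)‖ := norm_add_le _ _
          _ ≤ ν * M + ‖x (T - k) - x (T + k)‖ := by
              exact add_le_add_left h1 _
      have hlip := hf_lip u (x (T + k)) b
      have hres := hf_res (x (T + k)) b
      have hbig : ‖u - x (T + (k + 1))‖ ≤
          ‖x (T - k) - x (T + k)‖ + ν * (L * ‖u - x (T + k)‖) + ν * E := by
        rw [hid]
        calc ‖(x (T - k) - x (T + k)) - ν • (f (u, b) - f (x (T + k), b))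
              - ν • (f (x (T + k), -b) + f (x (T + k), b))‖
            ≤ ‖(x (T - k) - x (T + k)) - ν • (f (u, b) - f (x (T + k), b))‖
              + ‖ν • (f (x (T + k), -b) + f (x (T + k), b))‖ := norm_sub_le _ _
          _ ≤ ‖x (T - k) - x (T + k)‖ + ‖ν • (f (u, b) - f (x (T + k), b))‖
              + ‖ν • (f (x (T + k), -b) + f (x (T + k), b))‖ := by
              exact add_le_add_left (norm_sub_le _ _) _
          _ ≤ ‖x (T - k) - x (T + k)‖ + ν * (L * ‖u - x (T + k)‖) + ν * E := by
              rw [norm_smul, norm_smul, Real.norm_eq_abs, abs_of_pos hν]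
              have h3 : ν * ‖f (u, b) - f (x (T + k), b)‖ ≤ ν * (L * ‖u - x (T + k)‖) :=
                mul_le_mul_of_nonneg_left hlip (le_of_lt hν)
              have h4 : ν * ‖f (x (T + k), -b) + f (x (T + k), b)‖ ≤ ν * E :=
                mul_le_mul_of_nonneg_left hres (le_of_lt hν)
              linarith
      have hnn : (0:ℝ) ≤ ‖x (T - k) - x (T + k)‖ := norm_nonneg _
      have hb1 : (0:ℝ) ≤ 1 + L * ν := by nlinarith
      have hp : (1:ℝ) ≤ (1 + L * ν) ^ k := one_le_pow₀ (by nlinarith)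
      have hstep : ‖u - x (T + (k + 1))‖ ≤
          (1 + L * ν) * ‖x (T - k) - x (T + k)‖ + ν * (L * (ν * M)) + ν * E := by
        nlinarith [mul_le_mul_of_nonneg_left h2 (mul_pos hν hL).le]
      calc ‖x (T - (k + 1)) - x (T + (k + 1))‖ = ‖u - x (T + (k + 1))‖ := by rw [hu]
        _ ≤ (1 + L * ν) * ‖x (T - k) - x (T + k)‖ + ν * (L * (ν * M)) + ν * E := hstep
        _ ≤ (1 + L * ν) * (C * ((1 + L * ν) ^ k - 1)) + ν * (L * (ν * M)) + ν * E := by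
            have := mul_le_mul_of_nonneg_left ihk hb1
            linarith
        _ ≤ C * ((1 + L * ν) ^ (k + 1) - 1) := by
            rw [pow_succ]
            have heq : (1 + L * ν) * (C * ((1 + L * ν) ^ k - 1)) + ν * (L * (ν * M)) + ν * E
                = C * ((1 + L * ν) ^ k * (1 + L * ν) - 1) := by
              rw [hC]; linear_combination (-ν) * hEL
            linarith
  have := key T le_rfl
  simpa [Nat.sub_self, two_mul] using this
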